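/- Let n ≥ 1 and α > 0. For every measurable f : ℂⁿ → ℂ with ‖f‖_{∞,α} := ess sup_{z∈ℂⁿ} |f(z)| e^{−(α/2)|z|²} < ∞, the integral (P_α f)(z) = ∫_{ℂⁿ} e^{α⟨z,w⟩} f(w) dμ_α(w) converges absolutely for every z ∈ ℂⁿ and satisfies |(P_α f)(z)| e^{−(α/2)|z|²} ≤ 2ⁿ ‖f‖_{∞,α} for all z ∈ ℂⁿ; in particular P_α is bounded on the space L_α^∞ = {f measurable : ‖f‖_{∞,α} < ∞} with norm at most 2ⁿ. -/

import Mathlib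

open MeasureTheory Complex Filter Metric
open scoped ENNReal NNReal

noncomputable section

set_option synthInstance.maxHeartbeats 1000000
set_option maxHeartbeats 1000000

/-- ℂⁿ with its Euclidean (Hermitian) norm. -/
abbrev Cn (n : ℕ) := EuclideanSpace ℂ (Fin n)

instance (n : ℕ) : MeasurableSpace (Cn n) :=
  MeasurableSpace.comap (fun x : Cn n => WithLp.ofLp x) MeasurableSpace.pi
instance (n : ℕ) : MeasureSpace (Cn n) :=
  ⟨Measure.map (fun x : Fin n → ℂ => (WithLp.toLp 2 x : Cn n)) (Measure.pi fun _ => (volume : Measure ℂ))⟩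

/-- The standard Hermitian inner product ⟨z,w⟩ on ℂⁿ, linear in the first argument and
antilinear in the second. -/
def herm {n : ℕ} (z w : Cn n) : ℂ := inner ℂ w z

/-- The Gaussian measure dμ_ν(z) = (ν/π)ⁿ e^{−ν|z|²} dz on ℂⁿ. -/
def gaussMeasure (n : ℕ) (ν : ℝ) : Measure (Cn n) :=
  volume.withDensity fun z => ENNReal.ofReal ((ν / Real.pi) ^ n * Real.exp (-ν * ‖z‖ ^ 2))

/-- L_α^p = L^p(ℂⁿ, μ_{pα/2}). -/
abbrev Lpa (n : ℕ) (p α : ℝ) := Lp ℂ (ENNReal.ofReal p) (gaussMeasure n (p * α / 2))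

/-- The norm of L_α^∞: ess sup of |f(z)| e^{−(α/2)|z|²}, valued in [0,∞]. -/
def LinfNorm (n : ℕ) (α : ℝ) (f : Cn n → ℂ) : ENNReal :=
  essSup (fun z => ENNReal.ofReal (‖f z‖ * Real.exp (-(α / 2) * ‖z‖ ^ 2)))
    (volume : Measure (Cn n))

-- auxiliary instances
instance (n : ℕ) : BorelSpace (Cn n) := inferInstanceAs (BorelSpace (PiLp 2 (fun _ : Fin n => ℂ)))
instance (n : ℕ) : SigmaFinite (volume : Measure (Cn n)) :=
  (MeasurableEquiv.toLp 2 (Fin n → ℂ)).sigmaFinite_map (μ := (volume : Measure (Fin n → ℂ)))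

-- 1D lemmas
lemma oneD_cast_arg (b : ℝ) (a v : ℂ) : -(b:ℂ) * ‖v‖^2 + (2*b : ℂ) * ((inner ℝ a v : ℝ) : ℂ)
    = ((2*b * (inner ℝ a v : ℝ) - b * ‖v‖^2 : ℝ) : ℂ) := by push_cast; ring

lemma oneD_integrable (b : ℝ) (hb : 0 < b) (a : ℂ) :
    Integrable (fun v : ℂ => Real.exp (2*b * (inner ℝ a v : ℝ) - b * ‖v‖^2)) := by
  have h := (GaussianFourier.integrable_cexp_neg_mul_sq_norm_add (b := (b:ℂ))
    (by simpa using hb) (2*b) a).norm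
  have e : (fun v : ℂ => Real.exp (2*b * (inner ℝ a v : ℝ) - b * ‖v‖^2))
      = fun v : ℂ => ‖Complex.exp (-(b:ℂ) * ‖v‖^2 + (2*b : ℂ) * (inner ℝ a v : ℝ))‖ := by
    funext v
    rw [oneD_cast_arg, ← Complex.ofReal_exp, Complex.norm_real, Real.norm_eq_abs, Real.abs_exp]
  rw [e]; exact h

lemma oneD_int_real (b : ℝ) (hb : 0 < b) (a : ℂ) :
    ∫ v : ℂ, Real.exp (2*b * (inner ℝ a v : ℝ) - b * ‖v‖^2)
      = (Real.pi/b) * Real.exp (b * ‖a‖^2) := by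
  have h := GaussianFourier.integral_cexp_neg_mul_sq_norm_add (b := (b:ℂ))
    (by simpa using hb) (2*b) a
  rw [Complex.finrank_real_complex] at h
  rw [show ((2:ℕ) : ℂ)/2 = 1 by norm_num, Complex.cpow_one] at h
  have hb' : (b:ℂ) ≠ 0 := by exact_mod_cast hb.ne'
  rw [← Complex.ofReal_inj]
  calc ((∫ v : ℂ, Real.exp (2*b * (inner ℝ a v : ℝ) - b * ‖v‖^2) : ℝ) : ℂ)
      = ∫ v : ℂ, ((Real.exp (2*b * (inner ℝ a v : ℝ) - b * ‖v‖^2) : ℝ) : ℂ) :=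
        integral_ofReal.symm
    _ = ∫ v : ℂ, Complex.exp (-(b:ℂ) * ‖v‖^2 + (2*b : ℂ) * (inner ℝ a v : ℝ)) := by
        congr 1; funext v
        rw [oneD_cast_arg, ← Complex.ofReal_exp]
    _ = ((Real.pi : ℂ)/(b:ℂ)) * Complex.exp ((2*b:ℂ)^2 * ‖a‖^2 / (4*b)) := h
    _ = ((Real.pi/b * Real.exp (b * ‖a‖^2) : ℝ) : ℂ) := by
        rw [show ((2*b:ℂ))^2 * (‖a‖:ℂ)^2 / (4*(b:ℂ)) = ((b * ‖a‖^2 : ℝ) : ℂ) by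
          push_cast; field_simp; ring]
        rw [← Complex.ofReal_exp]; push_cast; ring

-- pi-level lemmas
lemma pi_integrable (n : ℕ) (b : ℝ) (hb : 0 < b) (z : Fin n → ℂ) :
    Integrable (fun w : Cn n => ∏ i, Real.exp (2*b * (inner ℝ (z i) (w i) : ℝ) - b * ‖w i‖^2))
      (volume : Measure (Cn n)) := by
  have h : Integrable (fun w : Fin n → ℂ =>
      ∏ i, Real.exp (2*b * (inner ℝ (z i) (w i) : ℝ) - b * ‖w i‖^2)) volume :=
    Integrable.fintype_prod
      (f := fun i (v : ℂ) => Real.exp (2*b * (inner ℝ (z i) v : ℝ) - b * ‖v‖^2))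
      (fun i => oneD_integrable b hb (z i))
  exact (MeasurableEquiv.toLp 2 (Fin n → ℂ)).measurableEmbedding.integrable_map_iff.mpr h

lemma pi_int (n : ℕ) (b : ℝ) (hb : 0 < b) (z : Fin n → ℂ) :
    ∫ w : Cn n, ∏ i, Real.exp (2*b * (inner ℝ (z i) (w i) : ℝ) - b * ‖w i‖^2)
      = ∏ i, ((Real.pi/b) * Real.exp (b * ‖z i‖^2)) := by
  rw [show (∫ w : Cn n, ∏ i, Real.exp (2*b * (inner ℝ (z i) (w i) : ℝ) - b * ‖w i‖^2))
    = ∫ w : Fin n → ℂ, ∏ i, Real.exp (2*b * (inner ℝ (z i) (w i) : ℝ) - b * ‖w i‖^2)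
        ∂(Measure.pi fun _ => volume) from
      (MeasurableEquiv.toLp 2 (Fin n → ℂ)).measurableEmbedding.integral_map _]
  rw [integral_fintype_prod_eq_prod
    (f := fun i (v : ℂ) => Real.exp (2*b * (inner ℝ (z i) v : ℝ) - b * ‖v‖^2))]
  exact Finset.prod_congr rfl fun i _ => oneD_int_real b hb (z i)

lemma norm_sq_pi {n : ℕ} (w : Cn n) : ‖w‖^2 = ∑ i, ‖w i‖^2 := by
  rw [EuclideanSpace.norm_eq, Real.sq_sqrt]
  exact Finset.sum_nonneg fun i _ => by positivity

lemma herm_re {n : ℕ} (α : ℝ) (z w : Cn n) :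
    ((α : ℂ) * herm z w).re = ∑ i, α * (inner ℝ (z i) (w i) : ℝ) := by
  rw [show herm z w = ∑ i, (starRingEnd ℂ) (w i) * z i by
    rw [herm]; rw [PiLp.inner_apply]
    exact Finset.sum_congr rfl fun i _ => by rw [RCLike.inner_apply]; ring]
  rw [Finset.mul_sum, Complex.re_sum]
  refine Finset.sum_congr rfl fun i _ => ?_
  simp only [Complex.inner, Complex.mul_re, Complex.conj_re, Complex.conj_im,
    Complex.ofReal_re, Complex.ofReal_im]
  ring

def Dfun (n : ℕ) (α : ℝ) : Cn n → ℝ := fun w => (α/Real.pi)^n * Real.exp (-α * ‖w‖^2)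

lemma Dfun_pos (n : ℕ) {α : ℝ} (hα : 0 < α) (w : Cn n) : 0 < Dfun n α w := by
  have := Real.pi_pos
  unfold Dfun; positivity

lemma Dfun_meas (n : ℕ) (α : ℝ) : Measurable fun w : Cn n => (Dfun n α w).toNNReal := by
  have hc : Continuous (Dfun n α) := by
    unfold Dfun; fun_prop
  exact hc.measurable.real_toNNReal

lemma gauss_eq (n : ℕ) (α : ℝ) :
    gaussMeasure n α = volume.withDensity (fun w => ((Dfun n α w).toNNReal : ENNReal)) := rfl

lemma hkey (n : ℕ) {α : ℝ} (hα : 0 < α) (z w : Cn n) :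
    Dfun n α w * Real.exp (((α:ℂ) * herm z w).re + (α/2)*‖w‖^2)
      = (α/Real.pi)^n * ∏ i, Real.exp (2*(α/2) * (inner ℝ (z i) (w i) : ℝ) - (α/2) * ‖w i‖^2) := by
  rw [← Real.exp_sum Finset.univ
    (fun i => 2*(α/2) * (inner ℝ (z i) (w i) : ℝ) - (α/2) * ‖w i‖^2)]
  unfold Dfun
  rw [mul_assoc, ← Real.exp_add]
  congr 1
  rw [herm_re α z w, norm_sq_pi w]
  simp only [Finset.mul_sum]
  rw [← Finset.sum_add_distrib, ← Finset.sum_add_distrib]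
  congr 1
  apply Finset.sum_congr rfl
  intro i _
  ring

/-- For every f with ‖f‖_{∞,α} < ∞ the integral defining (P_α f)(z)
converges absolutely for every z and |(P_α f)(z)| e^{−(α/2)|z|²} ≤ 2ⁿ ‖f‖_{∞,α}; in
particular P_α is bounded on L_α^∞ with norm at most 2ⁿ. -/
theorem statement8 (n : ℕ) (hn : 1 ≤ n) (α : ℝ) (hα : 0 < α)
    (f : Cn n → ℂ) (hf : Measurable f) (hfin : LinfNorm n α f ≠ ⊤) :
    (∀ z : Cn n,
      Integrable (fun w => Complex.exp ((α : ℂ) * herm z w) * f w) (gaussMeasure n α)) ∧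
    (∀ z : Cn n,
      ENNReal.ofReal
          (‖∫ w, Complex.exp ((α : ℂ) * herm z w) * f w ∂gaussMeasure n α‖
            * Real.exp (-(α / 2) * ‖z‖ ^ 2))
        ≤ 2 ^ n * LinfNorm n α f) ∧
    LinfNorm n α
        (fun z => ∫ w, Complex.exp ((α : ℂ) * herm z w) * f w ∂gaussMeasure n α)
      ≤ 2 ^ n * LinfNorm n α f := by
  have hb : (0:ℝ) < α/2 := by positivity
  set M : ℝ := (LinfNorm n α f).toReal with hM
  have hM0 : 0 ≤ M := ENNReal.toReal_nonneg
  -- a.e. bound on f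
  have hae : ∀ᵐ w ∂(volume : Measure (Cn n)),
      ‖f w‖ ≤ M * Real.exp ((α/2) * ‖w‖^2) := by
    have h0 := ae_le_essSup (μ := (volume : Measure (Cn n)))
      (f := fun z => ENNReal.ofReal (‖f z‖ * Real.exp (-(α / 2) * ‖z‖ ^ 2)))
    filter_upwards [h0] with w hw
    have h1 : ‖f w‖ * Real.exp (-(α/2) * ‖w‖^2) ≤ M :=
      (ENNReal.ofReal_le_iff_le_toReal hfin).mp hw
    calc ‖f w‖
        = (‖f w‖ * Real.exp (-(α/2)*‖w‖^2)) * Real.exp ((α/2)*‖w‖^2) := by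
          rw [mul_assoc, ← Real.exp_add,
            show -(α/2)*‖w‖^2 + (α/2)*‖w‖^2 = 0 by ring, Real.exp_zero, mul_one]
      _ ≤ M * Real.exp ((α/2)*‖w‖^2) :=
          mul_le_mul_of_nonneg_right h1 (Real.exp_pos _).le
  have haeμ : ∀ᵐ w ∂(gaussMeasure n α),
      ‖f w‖ ≤ M * Real.exp ((α/2) * ‖w‖^2) := by
    rw [gauss_eq]
    exact (withDensity_absolutelyContinuous _ _).ae_le hae
  -- integrability and integral of the dominating function
  have hg_int : ∀ z : Cn n,
      Integrable (fun w => Real.exp (((α:ℂ) * herm z w).re + (α/2)*‖w‖^2)) (gaussMeasure n α) := by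
    intro z
    rw [gauss_eq]
    refine (integrable_withDensity_iff (Dfun_meas n α).coe_nnreal_ennreal
      (ae_of_all _ fun w => ENNReal.coe_lt_top)).mpr ?_
    have he : (fun w : Cn n =>
        Real.exp (((α:ℂ)*herm z w).re + (α/2)*‖w‖^2) * (((Dfun n α w).toNNReal : ℝ≥0∞)).toReal)
        = fun w => (α/Real.pi)^n *
            ∏ i, Real.exp (2*(α/2) * (inner ℝ (z i) (w i) : ℝ) - (α/2) * ‖w i‖^2) := by
      funext w
      rw [ENNReal.coe_toReal, Real.coe_toNNReal _ (Dfun_pos n hα w).le, mul_comm, hkey n hα z w]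
    rw [he]
    exact (pi_integrable n (α/2) hb z).const_mul _
  have hg_eval : ∀ z : Cn n,
      ∫ w, Real.exp (((α:ℂ) * herm z w).re + (α/2)*‖w‖^2) ∂(gaussMeasure n α)
        = 2^n * Real.exp ((α/2)*‖z‖^2) := by
    intro z
    rw [gauss_eq, integral_withDensity_eq_integral_smul (Dfun_meas n α)]
    have he : (fun w : Cn n =>
        (Dfun n α w).toNNReal • Real.exp (((α:ℂ)*herm z w).re + (α/2)*‖w‖^2))
        = fun w => (α/Real.pi)^n *
            ∏ i, Real.exp (2*(α/2) * (inner ℝ (z i) (w i) : ℝ) - (α/2) * ‖w i‖^2) := by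
      funext w
      rw [NNReal.smul_def, Real.coe_toNNReal _ (Dfun_pos n hα w).le, smul_eq_mul,
        hkey n hα z w]
    rw [he, integral_const_mul, pi_int n (α/2) hb z, Finset.prod_mul_distrib,
      Finset.prod_const, Finset.card_univ, Fintype.card_fin,
      ← Real.exp_sum Finset.univ (fun i => (α/2) * ‖z i‖^2),
      ← Finset.mul_sum, ← norm_sq_pi, ← mul_assoc, ← mul_pow]
    have hπ : Real.pi ≠ 0 := Real.pi_pos.ne'
    congr 2
    field_simp
  -- measurability and domination of the integrand
  have hmeasF : ∀ z : Cn n, AEStronglyMeasurable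
      (fun w => Complex.exp ((α:ℂ) * herm z w) * f w) (gaussMeasure n α) := by
    intro z
    have hc : Continuous fun w : Cn n => Complex.exp ((α:ℂ) * herm z w) := by
      apply Complex.continuous_exp.comp
      exact continuous_const.mul (Continuous.inner continuous_id continuous_const)
    exact (hc.measurable.mul hf).aestronglyMeasurable
  have hbound : ∀ z : Cn n, ∀ᵐ w ∂(gaussMeasure n α),
      ‖Complex.exp ((α:ℂ)*herm z w) * f w‖
        ≤ M * Real.exp (((α:ℂ)*herm z w).re + (α/2)*‖w‖^2) := by
    intro z
    filter_upwards [haeμ] with w hw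
    rw [norm_mul, Complex.norm_exp, Real.exp_add]
    calc Real.exp (((α:ℂ)*herm z w).re) * ‖f w‖
        ≤ Real.exp (((α:ℂ)*herm z w).re) * (M * Real.exp ((α/2)*‖w‖^2)) :=
          mul_le_mul_of_nonneg_left hw (Real.exp_pos _).le
      _ = M * (Real.exp (((α:ℂ)*herm z w).re) * Real.exp ((α/2)*‖w‖^2)) := by ring
  have hIntF : ∀ z : Cn n,
      Integrable (fun w => Complex.exp ((α:ℂ) * herm z w) * f w) (gaussMeasure n α) :=
    fun z => Integrable.mono' ((hg_int z).const_mul M) (hmeasF z) (hbound z)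
  have hEst2 : ∀ z : Cn n,
      ENNReal.ofReal
        (‖∫ w, Complex.exp ((α : ℂ) * herm z w) * f w ∂gaussMeasure n α‖
          * Real.exp (-(α / 2) * ‖z‖ ^ 2)) ≤ 2 ^ n * LinfNorm n α f := by
    intro z
    have hEst : ‖∫ w, Complex.exp ((α : ℂ) * herm z w) * f w ∂gaussMeasure n α‖
        ≤ M * (2^n * Real.exp ((α/2)*‖z‖^2)) := by
      calc ‖∫ w, Complex.exp ((α : ℂ) * herm z w) * f w ∂gaussMeasure n α‖
          ≤ ∫ w, M * Real.exp (((α:ℂ)*herm z w).re + (α/2)*‖w‖^2) ∂gaussMeasure n α :=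
            norm_integral_le_of_norm_le ((hg_int z).const_mul M) (hbound z)
        _ = M * (2^n * Real.exp ((α/2)*‖z‖^2)) := by rw [integral_const_mul, hg_eval z]
    have h1 : ‖∫ w, Complex.exp ((α : ℂ) * herm z w) * f w ∂gaussMeasure n α‖
        * Real.exp (-(α/2) * ‖z‖^2) ≤ 2^n * M := by
      calc ‖∫ w, Complex.exp ((α : ℂ) * herm z w) * f w ∂gaussMeasure n α‖
          * Real.exp (-(α/2) * ‖z‖^2)
          ≤ (M * (2^n * Real.exp ((α/2)*‖z‖^2))) * Real.exp (-(α/2)*‖z‖^2) :=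
            mul_le_mul_of_nonneg_right hEst (Real.exp_pos _).le
        _ = 2^n * M * (Real.exp ((α/2)*‖z‖^2) * Real.exp (-(α/2)*‖z‖^2)) := by ring
        _ = 2^n * M := by
            rw [← Real.exp_add, show (α/2)*‖z‖^2 + -(α/2)*‖z‖^2 = 0 by ring,
              Real.exp_zero, mul_one]
    have h2 : ENNReal.ofReal (2^n * M) = 2 ^ n * LinfNorm n α f := by
      rw [ENNReal.ofReal_mul (by positivity), hM, ENNReal.ofReal_toReal hfin,
        ENNReal.ofReal_pow (by norm_num)]
      norm_num
    rw [← h2]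
    exact ENNReal.ofReal_le_ofReal h1
  exact ⟨hIntF, hEst2, essSup_le_of_ae_le _ (ae_of_all _ fun z => hEst2 z)⟩
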